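/- Let a_1,...,a_k, b, n be integers with n ≥ 1, and suppose that gcd(∑_{i∈I} a_i, n) = 1 for every nonempty proper subset I of {1,...,k}. If gcd(a_1 + ... + a_k, n) does not divide b, then the number of solutions (x_1,...,x_k) ∈ (Z/nZ)^k of a_1x_1 + ... + a_kx_k ≡ b (mod n) with all x_i pairwise distinct equals (-1)^k (k-1)! + (n-1)(n-2)···(n-k+1). -/

import Mathlib

open Finset Function Fin

lemma descCast (m k : ℕ) : (m.descFactorial k : ℤ) = ∏ j ∈ Finset.range k, ((m:ℤ) - j) := by
  induction k with
  | zero => simp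
  | succ k ih =>
    rw [Finset.prod_range_succ, ← ih, Nat.descFactorial_succ]
    rcases le_or_gt k m with h | h
    · push_cast [Nat.cast_sub h]; ring
    · rw [Nat.descFactorial_eq_zero_iff_lt.mpr h]; simp

lemma unit_of_gcd {m : ℤ} {n : ℕ} (h : Int.gcd m n = 1) : IsUnit (m : ZMod n) := by
  obtain ⟨u, v, huv⟩ := Int.isCoprime_iff_gcd_eq_one.mpr h
  refine IsUnit.of_mul_eq_one (u : ZMod n) ?_
  have : ((u * m + v * n : ℤ) : ZMod n) = 1 := by rw [huv]; norm_cast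
  push_cast at this
  rwa [ZMod.natCast_self, mul_zero, add_zero, mul_comm] at this

lemma countA (n k : ℕ) (hn : 1 ≤ n) (hk : 1 ≤ k) (s : Fin k → ZMod n)
    (hs : IsUnit (∑ i, s i)) (t : ZMod n) :
    Nat.card {x : Fin k → ZMod n // ∑ i, s i * x i = t ∧ Function.Injective x}
      = (n-1).descFactorial (k-1) := by
  haveI : NeZero n := ⟨by omega⟩
  obtain ⟨u, hu⟩ := hs
  set d : (Fin k → ZMod n) → ZMod n := fun x => ↑u⁻¹ * (∑ i, s i * x i - t) with hd
  have key : ∀ x : Fin k → ZMod n, ∀ c : ZMod n, ∑ i, s i * (x i - c) = ∑ i, s i * x i - (↑u) * c := by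
    intro x c
    simp only [mul_sub, Finset.sum_sub_distrib, ← Finset.sum_mul, hu]
  have e : {x : Fin k → ZMod n // Function.Injective x} ≃
      ZMod n × {x : Fin k → ZMod n // ∑ i, s i * x i = t ∧ Function.Injective x} :=
    { toFun := fun x => (d x.1, ⟨fun i => x.1 i - d x.1, by
        rw [key, hd, Units.mul_inv_cancel_left, sub_sub_cancel]
        , by
        intro i j hij
        exact x.2 (by simpa using sub_left_injective hij)⟩)
      invFun := fun p => ⟨fun i => p.2.1 i + p.1, by
        intro i j hij
        exact p.2.2.2 (by simpa using add_left_injective _ hij)⟩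
      left_inv := by intro x; ext i; simp
      right_inv := by
        rintro ⟨c, ⟨y, hy, hyi⟩⟩
        have hdy : d (fun i => y i + c) = c := by
          simp only [hd, mul_add, Finset.sum_add_distrib, ← Finset.sum_mul, hy, hu]
          rw [add_sub_cancel_left, ← hu, Units.inv_mul_cancel_left]
        refine Prod.ext hdy ?_
        ext i
        simp [hdy] }
  have h1 : Nat.card {x : Fin k → ZMod n // Function.Injective x} = n.descFactorial k := by
    rw [Nat.card_congr (Equiv.subtypeInjectiveEquivEmbedding (Fin k) (ZMod n)),
      Nat.card_eq_fintype_card, Fintype.card_embedding_eq, ZMod.card, Fintype.card_fin]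
  rw [Nat.card_congr e, Nat.card_prod, Nat.card_zmod] at h1
  obtain ⟨m, rfl⟩ : ∃ m, n = m + 1 := ⟨n - 1, (Nat.sub_add_cancel hn).symm⟩
  obtain ⟨l, rfl⟩ : ∃ l, k = l + 1 := ⟨k - 1, (Nat.sub_add_cancel hk).symm⟩
  rw [Nat.succ_descFactorial_succ] at h1
  simpa using (Nat.eq_of_mul_eq_mul_left (Nat.succ_pos m) h1.symm).symm

lemma exu {n k : ℕ} (x : Fin (k+1) → ZMod n) (h1 : Function.Injective (x ∘ Fin.castSucc))
    (h2 : ¬ Function.Injective x) : ∃! j : Fin k, x (Fin.castSucc j) = x (Fin.last k) := by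
  rw [Function.Injective] at h2
  push_neg at h2
  obtain ⟨i, j, hij, hne⟩ := h2
  have key : ∃ j0 : Fin k, x (Fin.castSucc j0) = x (Fin.last k) := by
    rcases eq_or_ne i (Fin.last k) with rfl | hi
    · obtain ⟨j0, rfl⟩ := Fin.exists_castSucc_eq.mpr hne.symm
      exact ⟨j0, hij.symm⟩
    · obtain ⟨i0, rfl⟩ := Fin.exists_castSucc_eq.mpr hi
      rcases eq_or_ne j (Fin.last k) with rfl | hj
      · exact ⟨i0, hij⟩
      · obtain ⟨j0, rfl⟩ := Fin.exists_castSucc_eq.mpr hj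
        exact absurd (h1 (show (x ∘ Fin.castSucc) i0 = (x ∘ Fin.castSucc) j0 from hij))
          (by simpa using hne)
  obtain ⟨j0, hj0⟩ := key
  exact ⟨j0, hj0, fun j1 hj1 => h1 (show (x ∘ Fin.castSucc) j1 = (x ∘ Fin.castSucc) j0 from by
    simp only [Function.comp_apply, hj0, hj1])⟩

theorem mainAux : ∀ (k : ℕ), 1 ≤ k → ∀ (n : ℕ), 1 ≤ n → ∀ (a : Fin k → ℤ) (b : ℤ),
    (∀ I : Finset (Fin k), I.Nonempty → I ≠ Finset.univ → Int.gcd (∑ i ∈ I, a i) n = 1) →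
    (¬ (Int.gcd (∑ i, a i) n : ℤ) ∣ b) →
    (Nat.card {x : Fin k → ZMod n //
        ∑ i, (a i : ZMod n) * x i = (b : ZMod n) ∧ Function.Injective x} : ℤ) =
      (-1) ^ k * (Nat.factorial (k - 1) : ℤ) + ∏ j ∈ Finset.range (k - 1), ((n : ℤ) - (j + 1)) := by
  intro k
  induction k with
  | zero => intro h; omega
  | succ k ih =>
    intro _ n hn a b hI hb
    haveI : NeZero n := ⟨by omega⟩
    rcases Nat.eq_zero_or_pos k with rfl | hk
    · -- base case: 1 variable, no solutions
      have hE : IsEmpty {x : Fin 1 → ZMod n //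
          ∑ i, (a i : ZMod n) * x i = (b : ZMod n) ∧ Function.Injective x} := by
        refine ⟨fun x => hb ?_⟩
        obtain ⟨x, hx, -⟩ := x
        rw [Fin.sum_univ_one] at hx
        obtain ⟨t, ht⟩ := ZMod.intCast_surjective (x 0)
        have h0 : ((a 0 * t - b : ℤ) : ZMod n) = 0 := by
          push_cast
          rw [ht, hx]
          ring
        rw [ZMod.intCast_zmod_eq_zero_iff_dvd] at h0
        have hg : (Int.gcd (∑ i, a i) n : ℤ) ∣ a 0 * t - b := by
          exact dvd_trans (Int.gcd_dvd_right _ _) h0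
        have hg2 : (Int.gcd (∑ i, a i) n : ℤ) ∣ a 0 * t := by
          exact Dvd.dvd.mul_right (by simpa using Int.gcd_dvd_left (∑ i, a i) (n : ℤ)) t
        simpa using dvd_sub hg2 hg
      rw [Nat.card_of_isEmpty]
      norm_num
    · -- inductive step
      classical
      haveI : Nonempty (Fin k) := ⟨⟨0, hk⟩⟩
      set aM : Fin k → Fin k → ℤ :=
        fun j i => if i = j then a i.castSucc + a (Fin.last k) else a i.castSucc with haM
      -- pointwise/aggregate identities
      have hMpt : ∀ (j : Fin k) (y : Fin k → ZMod n), ∑ i, (aM j i : ZMod n) * y i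
          = (∑ i, (a i.castSucc : ZMod n) * y i) + (a (Fin.last k) : ZMod n) * y j := by
        intro j y
        have h1 : ∀ i ∈ (Finset.univ : Finset (Fin k)), (aM j i : ZMod n) * y i
            = (a i.castSucc : ZMod n) * y i
              + (if i = j then (a (Fin.last k) : ZMod n) * y i else 0) := by
          intro i _
          rcases eq_or_ne i j with rfl | h
          · simp only [haM, if_pos rfl]; push_cast; ring
          · simp [haM, h]
        rw [Finset.sum_congr rfl h1, Finset.sum_add_distrib, Finset.sum_ite_eq' Finset.univ j]
        simp
      have hMsum : ∀ (j : Fin k) (I : Finset (Fin k)), ∑ i ∈ I, aM j i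
          = ∑ i ∈ I, a i.castSucc + (if j ∈ I then a (Fin.last k) else 0) := by
        intro j I
        have h1 : ∀ i ∈ I, aM j i = a i.castSucc + (if i = j then a (Fin.last k) else 0) := by
          intro i _
          rcases eq_or_ne i j with rfl | h
          · simp [haM]
          · simp [haM, h]
        rw [Finset.sum_congr rfl h1, Finset.sum_add_distrib, Finset.sum_ite_eq' I j]
      have hfull : ∀ x : Fin (k+1) → ZMod n, ∑ i, (a i : ZMod n) * x i
          = ∑ i : Fin k, (a i.castSucc : ZMod n) * x i.castSucc
            + (a (Fin.last k) : ZMod n) * x (Fin.last k) :=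
        fun x => by rw [Fin.sum_univ_castSucc]
      have hmapsum : ∀ I : Finset (Fin k),
          ∑ i ∈ I.map Fin.castSuccEmb, a i = ∑ i ∈ I, a i.castSucc := by
        intro I; rw [Finset.sum_map]; rfl
      have hlast_not_map : ∀ I : Finset (Fin k), Fin.last k ∉ I.map Fin.castSuccEmb := by
        intro I h
        simp only [Finset.mem_map, Fin.coe_castSuccEmb] at h
        obtain ⟨i, -, hi⟩ := h
        exact (Fin.castSucc_lt_last i).ne hi
      -- hypotheses for the merged systems
      have hIM : ∀ (j : Fin k) (I : Finset (Fin k)), I.Nonempty → I ≠ Finset.univ →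
          Int.gcd (∑ i ∈ I, aM j i) n = 1 := by
        intro j I hne hprop
        obtain ⟨m, hm⟩ : ∃ m, m ∉ I := by
          by_contra h; push_neg at h; exact hprop (Finset.eq_univ_iff_forall.mpr h)
        by_cases hj : j ∈ I
        · have he : ∑ i ∈ I, aM j i
              = ∑ i ∈ insert (Fin.last k) (I.map Fin.castSuccEmb), a i := by
            rw [Finset.sum_insert (hlast_not_map I), hmapsum, hMsum, if_pos hj]; ring
          rw [he]
          refine hI _ ⟨Fin.last k, Finset.mem_insert_self _ _⟩ ?_
          intro hEq
          have : m.castSucc ∈ insert (Fin.last k) (I.map Fin.castSuccEmb) := by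
            rw [hEq]; exact Finset.mem_univ _
          rcases Finset.mem_insert.mp this with h | h
          · exact (Fin.castSucc_lt_last m).ne h
          · simp only [Finset.mem_map, Fin.coe_castSuccEmb] at h
            obtain ⟨i, hiI, hi⟩ := h
            exact hm (by rwa [Fin.castSucc_injective k hi] at hiI)
        · have he : ∑ i ∈ I, aM j i = ∑ i ∈ I.map Fin.castSuccEmb, a i := by
            rw [hmapsum, hMsum, if_neg hj, add_zero]
          rw [he]
          obtain ⟨i0, hi0⟩ := hne
          refine hI _ ⟨i0.castSucc, Finset.mem_map_of_mem _ hi0⟩ ?_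
          intro hEq
          exact hlast_not_map I (hEq ▸ Finset.mem_univ _)
      have hbM : ∀ j : Fin k, ¬ (Int.gcd (∑ i, aM j i) n : ℤ) ∣ b := by
        intro j
        have he : ∑ i, aM j i = ∑ i, a i := by
          rw [hMsum, if_pos (Finset.mem_univ j), Fin.sum_univ_castSucc]
        rw [he]; exact hb
      -- per-system cardinalities from the induction hypothesis
      have hU : ∀ j : Fin k, (Nat.card {y : Fin k → ZMod n //
            ∑ i, (aM j i : ZMod n) * y i = (b : ZMod n) ∧ Function.Injective y} : ℤ)
          = (-1) ^ k * (Nat.factorial (k - 1) : ℤ)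
            + ∏ j' ∈ Finset.range (k - 1), ((n : ℤ) - (j' + 1)) :=
        fun j => ih hk n hn (aM j) b (hIM j) (hbM j)
      -- the sum of the first k coefficients is invertible
      have hsum2unit : IsUnit (∑ i : Fin k, (a i.castSucc : ZMod n)) := by
        have hg := hI (Finset.univ.map Fin.castSuccEmb)
          ⟨(⟨0, hk⟩ : Fin k).castSucc, Finset.mem_map_of_mem _ (Finset.mem_univ _)⟩
          (fun hEq => hlast_not_map Finset.univ (hEq ▸ Finset.mem_univ _))
        rw [hmapsum] at hg
        have h2 := unit_of_gcd hg
        rwa [Int.cast_sum] at h2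
      -- count tuples whose first k coordinates are injective
      have eT : {x : Fin (k+1) → ZMod n // (∑ i, (a i : ZMod n) * x i = (b : ZMod n))
            ∧ Function.Injective (x ∘ Fin.castSucc)}
          ≃ Σ v : ZMod n, {y : Fin k → ZMod n //
              ∑ i, (a i.castSucc : ZMod n) * y i
                = (b : ZMod n) - (a (Fin.last k) : ZMod n) * v ∧ Function.Injective y} := by
        refine (Equiv.subtypeEquiv (Fin.snocEquiv (fun _ => ZMod n)).symm ?_).trans
          (Equiv.subtypeProdEquivSigmaSubtype
            (fun (v : ZMod n) (y : Fin k → ZMod n) =>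
              ∑ i, (a i.castSucc : ZMod n) * y i
                = (b : ZMod n) - (a (Fin.last k) : ZMod n) * v ∧ Function.Injective y))
        intro x
        show (∑ i, (a i : ZMod n) * x i = (b : ZMod n))
            ∧ Function.Injective (x ∘ Fin.castSucc) ↔
          (∑ i : Fin k, (a i.castSucc : ZMod n) * x i.castSucc
            = (b : ZMod n) - (a (Fin.last k) : ZMod n) * x (Fin.last k)
          ∧ Function.Injective (x ∘ Fin.castSucc))
        rw [hfull x]
        constructor
        · rintro ⟨h1, h2⟩; exact ⟨by rw [← h1]; ring, h2⟩
        · rintro ⟨h1, h2⟩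
          refine ⟨?_, h2⟩
          rw [h1]; ring
      have hT : Nat.card {x : Fin (k+1) → ZMod n //
            (∑ i, (a i : ZMod n) * x i = (b : ZMod n))
            ∧ Function.Injective (x ∘ Fin.castSucc)}
          = n * (n-1).descFactorial (k-1) := by
        rw [Nat.card_congr eT, Nat.card_eq_fintype_card, Fintype.card_sigma]
        have hfib : ∀ v : ZMod n, Fintype.card {y : Fin k → ZMod n //
              ∑ i, (a i.castSucc : ZMod n) * y i
                = (b : ZMod n) - (a (Fin.last k) : ZMod n) * v ∧ Function.Injective y}
            = (n-1).descFactorial (k-1) := by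
          intro v
          rw [← Nat.card_eq_fintype_card]
          exact countA n k hn hk _ hsum2unit _
        rw [Finset.sum_congr rfl (fun v _ => hfib v), Finset.sum_const, Finset.card_univ,
          ZMod.card, smul_eq_mul]
      -- split according to whether the full tuple is injective
      have eS : {x : {x : Fin (k+1) → ZMod n // (∑ i, (a i : ZMod n) * x i = (b : ZMod n))
            ∧ Function.Injective (x ∘ Fin.castSucc)} // Function.Injective x.1}
          ≃ {x : Fin (k+1) → ZMod n // ∑ i, (a i : ZMod n) * x i = (b : ZMod n)
            ∧ Function.Injective x} :=
        { toFun := fun x => ⟨x.1.1, x.1.2.1, x.2⟩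
          invFun := fun x => ⟨⟨x.1, x.2.1, x.2.2.comp (Fin.castSucc_injective k)⟩, x.2.2⟩
          left_inv := fun x => rfl
          right_inv := fun x => rfl }
      have eU : {x : {x : Fin (k+1) → ZMod n // (∑ i, (a i : ZMod n) * x i = (b : ZMod n))
            ∧ Function.Injective (x ∘ Fin.castSucc)} // ¬ Function.Injective x.1}
          ≃ Σ j : Fin k, {y : Fin k → ZMod n //
              ∑ i, (aM j i : ZMod n) * y i = (b : ZMod n) ∧ Function.Injective y} := by
        have hjeq : ∀ (X : Fin (k+1) → ZMod n) (h1 : Function.Injective (X ∘ Fin.castSucc))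
            (h2 : ¬ Function.Injective X),
            X ((exu X h1 h2).exists.choose).castSucc = X (Fin.last k) :=
          fun X h1 h2 => (exu X h1 h2).exists.choose_spec
        refine
        { toFun := fun x => ⟨(exu x.1.1 x.1.2.2 x.2).exists.choose,
            ⟨fun i => x.1.1 i.castSucc, ?_, x.1.2.2⟩⟩
          invFun := fun p => ⟨⟨Fin.snoc p.2.1 (p.2.1 p.1), ?_, ?_⟩, ?_⟩
          left_inv := ?_
          right_inv := ?_ }
        · -- sum condition for toFun
          rw [hMpt]
          have heq1 : x.1.1 ((exu x.1.1 x.1.2.2 x.2).exists.choose).castSucc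
              = x.1.1 (Fin.last k) := hjeq x.1.1 x.1.2.2 x.2
          rw [heq1, ← hfull]
          exact x.1.2.1
        · -- sum condition for invFun
          rw [hfull, Fin.snoc_last]
          have h1 : ∀ i ∈ (Finset.univ : Finset (Fin k)),
              (a i.castSucc : ZMod n) * (Fin.snoc p.2.1 (p.2.1 p.1) : Fin (k+1) → ZMod n) i.castSucc
              = (a i.castSucc : ZMod n) * p.2.1 i := by
            intro i _; rw [Fin.snoc_castSucc]
          rw [Finset.sum_congr rfl h1, ← hMpt]
          exact p.2.2.1
        · -- first k injective for invFun
          have hcomp : ((Fin.snoc p.2.1 (p.2.1 p.1) : Fin (k+1) → ZMod n) ∘ Fin.castSucc)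
              = p.2.1 := funext fun i => Fin.snoc_castSucc _ _ _
          rw [hcomp]
          exact p.2.2.2
        · -- not injective for invFun
          intro hinj
          have h1 : (Fin.snoc p.2.1 (p.2.1 p.1) : Fin (k+1) → ZMod n) p.1.castSucc
              = (Fin.snoc p.2.1 (p.2.1 p.1) : Fin (k+1) → ZMod n) (Fin.last k) := by
            rw [Fin.snoc_castSucc, Fin.snoc_last]
          exact (Fin.castSucc_lt_last p.1).ne (hinj h1)
        · -- left inverse
          intro x
          apply Subtype.ext
          apply Subtype.ext
          show Fin.snoc (fun i => x.1.1 i.castSucc)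
            (x.1.1 ((exu x.1.1 x.1.2.2 x.2).exists.choose).castSucc) = x.1.1
          rw [hjeq x.1.1 x.1.2.2 x.2]
          exact Fin.snoc_init_self x.1.1
        · -- right inverse
          rintro ⟨j, y, hy1, hy2⟩
          have hXcs : ((Fin.snoc y (y j) : Fin (k+1) → ZMod n) ∘ Fin.castSucc) = y :=
            funext fun i => Fin.snoc_castSucc _ _ _
          have hinj1 : Function.Injective
              ((Fin.snoc y (y j) : Fin (k+1) → ZMod n) ∘ Fin.castSucc) := by
            rw [hXcs]; exact hy2
          have hinj2 : ¬ Function.Injective (Fin.snoc y (y j) : Fin (k+1) → ZMod n) :=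
            fun hinj => (Fin.castSucc_lt_last j).ne
              (hinj (by rw [Fin.snoc_castSucc, Fin.snoc_last]))
          refine Sigma.subtype_ext ?_ hXcs
          show (exu (Fin.snoc y (y j)) hinj1 hinj2).exists.choose = j
          apply hy2
          have hspec := hjeq (Fin.snoc y (y j)) hinj1 hinj2
          exact ((Fin.snoc_castSucc _ _ _).symm.trans hspec).trans (Fin.snoc_last _ _)
      -- assemble the cardinalities
      have hsplit : Nat.card {x : Fin (k+1) → ZMod n //
            (∑ i, (a i : ZMod n) * x i = (b : ZMod n))
            ∧ Function.Injective (x ∘ Fin.castSucc)}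
          = Nat.card {x : Fin (k+1) → ZMod n // ∑ i, (a i : ZMod n) * x i = (b : ZMod n)
              ∧ Function.Injective x}
            + ∑ j : Fin k, Nat.card {y : Fin k → ZMod n //
                ∑ i, (aM j i : ZMod n) * y i = (b : ZMod n) ∧ Function.Injective y} := by
        rw [← Nat.card_congr (Equiv.sumCompl (fun x : {x : Fin (k+1) → ZMod n //
            (∑ i, (a i : ZMod n) * x i = (b : ZMod n))
            ∧ Function.Injective (x ∘ Fin.castSucc)} => Function.Injective x.1)),
          Nat.card_sum, Nat.card_congr eS, Nat.card_congr eU]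
        congr 1
        rw [Nat.card_eq_fintype_card, Fintype.card_sigma]
        exact Finset.sum_congr rfl fun j _ => (Nat.card_eq_fintype_card).symm
      -- final computation
      have hDD : ((n-1).descFactorial (k-1) : ℤ)
          = ∏ j ∈ Finset.range (k - 1), ((n : ℤ) - (j + 1)) := by
        rw [descCast]
        refine Finset.prod_congr rfl fun j _ => ?_
        rw [Nat.cast_sub hn]
        push_cast
        ring
      have hcast : (Nat.card {x : Fin (k+1) → ZMod n //
            ∑ i, (a i : ZMod n) * x i = (b : ZMod n) ∧ Function.Injective x} : ℤ)
          = (n : ℤ) * ((n-1).descFactorial (k-1) : ℤ)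
            - (k : ℤ) * ((-1) ^ k * (Nat.factorial (k - 1) : ℤ)
              + ∏ j' ∈ Finset.range (k - 1), ((n : ℤ) - (j' + 1))) := by
        have h2 := congrArg (fun m : ℕ => (m : ℤ)) hsplit
        simp only [hT] at h2
        push_cast at h2
        rw [Finset.sum_congr rfl (fun j _ => hU j), Finset.sum_const, Finset.card_univ,
          Fintype.card_fin, nsmul_eq_mul] at h2
        linarith
      rw [hcast, hDD]
      have hk1 : k - 1 + 1 = k := Nat.sub_add_cancel hk
      have hprodk : ∏ j ∈ Finset.range (k + 1 - 1), ((n : ℤ) - (j + 1))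
          = (∏ j ∈ Finset.range (k - 1), ((n : ℤ) - (j + 1))) * ((n : ℤ) - k) := by
        rw [Nat.add_sub_cancel, ← hk1, Finset.prod_range_succ, hk1]
        congr 1
        rw [Nat.cast_sub hk]
        push_cast
        ring
      have hfact : ((k.factorial : ℤ)) = (k : ℤ) * ((k-1).factorial : ℤ) := by
        conv_lhs => rw [← hk1, Nat.factorial_succ, hk1]
        push_cast
        ring
      rw [hprodk]
      have hkk : (k + 1 : ℕ) - 1 = k := rfl
      rw [hkk, hfact]
      ring

theorem stmt_4 (k n : ℕ) (hn : 1 ≤ n) (hk : 1 ≤ k) (a : Fin k → ℤ) (b : ℤ)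
    (hI : ∀ I : Finset (Fin k), I.Nonempty → I ≠ Finset.univ →
      Int.gcd (∑ i ∈ I, a i) n = 1)
    (hb : ¬ (Int.gcd (∑ i, a i) n : ℤ) ∣ b) :
    (Nat.card {x : Fin k → ZMod n //
        ∑ i, (a i : ZMod n) * x i = (b : ZMod n) ∧ Function.Injective x} : ℤ) =
      (-1) ^ k * (Nat.factorial (k - 1) : ℤ) + ∏ j ∈ Finset.range (k - 1), ((n : ℤ) - (j + 1)) :=
  mainAux k hk n hn a b hI hb
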